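/- For every n ≥ 1, every j with 0 ≤ j ≤ ⌊(n−1)/2⌋, and every k with j ≤ k ≤ n−j−1, there exists a permutation π of [n] with exactly j peaks and exactly k descents. -/

import Mathlib

/-- A permutation: a list of distinct positive integers. -/
def IsPerm (π : List ℕ) : Prop := π.Nodup ∧ ∀ x ∈ π, 0 < x

/-- The descent set (1-indexed): `i ∈ [n-1]` with `π_i > π_{i+1}`. -/
def desSet (π : List ℕ) : Finset ℕ :=
  (Finset.Icc 1 (π.length - 1)).filter (fun i => π.getD i 0 < π.getD (i-1) 0)

/-- Number of descents. -/
def des (π : List ℕ) : ℕ := (desSet π).card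

/-- Major index: sum of descent positions. -/
def maj (π : List ℕ) : ℕ := ∑ i ∈ desSet π, i

/-- Number of peaks: `2 ≤ i ≤ n-1` with `π_{i-1} < π_i > π_{i+1}` (1-indexed). -/
def pk (π : List ℕ) : ℕ :=
  ((Finset.Icc 2 (π.length - 1)).filter (fun i =>
    π.getD (i-2) 0 < π.getD (i-1) 0 ∧ π.getD i 0 < π.getD (i-1) 0)).card

/-- Number of valleys: `2 ≤ i ≤ n-1` with `π_{i-1} > π_i < π_{i+1}` (1-indexed). -/
def valley (π : List ℕ) : ℕ :=
  ((Finset.Icc 2 (π.length - 1)).filter (fun i =>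
    π.getD (i-1) 0 < π.getD (i-2) 0 ∧ π.getD (i-1) 0 < π.getD i 0)).card

/-- The left peak set: `i ∈ [n-1]` with `π_{i-1} < π_i > π_{i+1}`, where `π_0 := 0`. -/
def lpkSet (π : List ℕ) : Finset ℕ :=
  (Finset.Icc 1 (π.length - 1)).filter (fun i =>
    (0 :: π).getD (i-1) 0 < (0 :: π).getD i 0 ∧ (0 :: π).getD (i+1) 0 < (0 :: π).getD i 0)

/-- Number of left peaks. -/
def lpk (π : List ℕ) : ℕ := (lpkSet π).card

/-- Number of biruns (maximal monotone consecutive subsequences):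
one more than the number of direction changes, for lists with at least 2 letters. -/
def br (π : List ℕ) : ℕ :=
  if π.length ≤ 1 then π.length
  else 1 + ((Finset.Icc 2 (π.length - 1)).filter (fun i =>
      (π.getD (i-2) 0 < π.getD (i-1) 0 ↔ π.getD i 0 < π.getD (i-1) 0))).card

/-- Number of up-down runs: the biruns, together with `π_1` when `π_1 > π_2`. -/
def udr (π : List ℕ) : ℕ :=
  br π + (if 2 ≤ π.length ∧ π.getD 1 0 < π.getD 0 0 then 1 else 0)

/-- The maximal increasing runs of a list. -/
def incRuns : List ℕ → List (List ℕ)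
  | [] => []
  | [a] => [[a]]
  | a :: b :: l =>
    match incRuns (b :: l) with
    | [] => [[a]]
    | r :: rs => if a < b then (a :: r) :: rs else [a] :: r :: rs

/-- Number of long runs (maximal increasing runs of length at least 2). -/
def lr (π : List ℕ) : ℕ := ((incRuns π).filter (fun r => 2 ≤ r.length)).length

/-- `1` if the initial run is long, `0` otherwise. -/
def lir (π : List ℕ) : ℕ := if 2 ≤ ((incRuns π).headD []).length then 1 else 0

/-- `1` if the final run is long, `0` otherwise. -/
def lfr (π : List ℕ) : ℕ := if 2 ≤ ((incRuns π).getLastD []).length then 1 else 0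

/-- The descent composition: the lengths of the maximal increasing runs. -/
def descComp (π : List ℕ) : List ℕ := (incRuns π).map List.length

/-- `τ` is a shuffle of `π` and `σ`: a permutation of length `|π| + |σ|`
containing both `π` and `σ` as subsequences. -/
def IsShuffle (π σ τ : List ℕ) : Prop :=
  τ.length = π.length + σ.length ∧ IsPerm τ ∧ π.Sublist τ ∧ σ.Sublist τ

open Classical in
/-- The finite set of shuffles of `π` and `σ`. -/
noncomputable def shuffles (π σ : List ℕ) : Finset (List ℕ) :=
  (π ++ σ).permutations.toFinset.filter (fun τ => IsShuffle π σ τ)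

/-- `J` is a refinement of `M` in the refinement order on weak compositions
(where `M` covers `L` when `M` is obtained from `L` by replacing two consecutive
parts by their sum): `M` is obtained by summing consecutive nonempty blocks of `J`. -/
def Refines (J M : List ℕ) : Prop :=
  ∃ P : List (List ℕ), P.flatten = J ∧ P.map List.sum = M ∧ ∀ b ∈ P, b ≠ []

/-- Successive differences, starting from `prev`. -/
def diffList : ℕ → List ℕ → List ℕ
  | _, [] => []
  | prev, a :: rest => (a - prev) :: diffList a rest

/-- `Comp(A)`: the composition of `N` determined by `A = {a₁ < ⋯ < a_j} ⊆ [N-1]`,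
namely `(a₁, a₂ - a₁, …, N - a_j)`. -/
def compOfSet (N : ℕ) (A : Finset ℕ) : List ℕ :=
  diffList 0 ((A.sort (· ≤ ·)) ++ [N])

/-- The `q`-factorial `[n]_q! = (1)(1+q)⋯(1+q+⋯+q^{n-1})`. -/
noncomputable def qFact (q : RatFunc ℚ) (n : ℕ) : RatFunc ℚ :=
  ∏ j ∈ Finset.range n, ∑ i ∈ Finset.range (j+1), q ^ i

/-- The `q`-binomial coefficient `[n choose k]_q`. -/
noncomputable def qBinom (q : RatFunc ℚ) (n k : ℕ) : RatFunc ℚ :=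
  qFact q n / (qFact q k * qFact q (n - k))

/-- For every `n ≥ 1`, `0 ≤ j ≤ ⌊(n-1)/2⌋` and `j ≤ k ≤ n-j-1`, there is a
permutation of `[n]` with `j` peaks and `k` descents. -/
def permF (n j k i : ℕ) : ℕ :=
  if i < 2*j then (if i % 2 = 0 then i/2 + 1 else n - i/2)
  else if i ≤ j + k then k + 1 - (i - 2*j)
  else i + 1 - j

def permL (n j k : ℕ) : List ℕ := (List.range n).map (permF n j k)

lemma permL_length (n j k : ℕ) : (permL n j k).length = n := by simp [permL]

lemma permL_getD (n j k i : ℕ) (h : i < n) : (permL n j k).getD i 0 = permF n j k i := by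
  rw [List.getD_eq_getElem _ _ (by simpa [permL_length])]
  simp [permL]

section
variable {n j k : ℕ} (hn : 1 ≤ n) (hj : j ≤ (n - 1) / 2) (hk1 : j ≤ k) (hk2 : k ≤ n - j - 1)
include hn hj hk1 hk2

omit hj in
lemma permL_perm : (permL n j k).Perm (List.range' 1 n) := by
  apply List.perm_of_nodup_nodup_toFinset_eq
  · refine (List.nodup_range).map_on ?_
    intro a ha b hb hab
    simp only [List.mem_range] at ha hb
    unfold permF at hab
    split_ifs at hab <;> omega
  · exact List.nodup_range' ..
  · ext x
    simp only [List.mem_toFinset, permL, List.mem_map, List.mem_range, List.mem_range'_1]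
    constructor
    · rintro ⟨i, hi, rfl⟩
      unfold permF
      split_ifs <;> omega
    · rintro ⟨hx1, hx2⟩
      rcases le_or_gt x j with h1 | h1
      · exact ⟨2*(x-1), by omega, by unfold permF; split_ifs <;> omega⟩
      rcases le_or_gt (n+1-j) x with h2 | h2
      · exact ⟨2*(n-x)+1, by omega, by unfold permF; split_ifs <;> omega⟩
      rcases le_or_gt x (k+1) with h3 | h3
      · exact ⟨2*j + (k+1-x), by omega, by unfold permF; split_ifs <;> omega⟩
      · exact ⟨x + j - 1, by omega, by unfold permF; split_ifs <;> omega⟩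

lemma permL_desSet : desSet (permL n j k) =
    ((Finset.Icc 1 j).image (fun a => 2 * a)) ∪ Finset.Icc (2*j+1) (j+k) := by
  ext i
  simp only [desSet, permL_length, Finset.mem_filter, Finset.mem_Icc, Finset.mem_union,
    Finset.mem_image]
  constructor
  · rintro ⟨⟨h1, h2⟩, hlt⟩
    rw [permL_getD n j k i (by omega), permL_getD n j k (i-1) (by omega)] at hlt
    have key : (i % 2 = 0 ∧ 2 ≤ i ∧ i ≤ 2*j) ∨ (2*j+1 ≤ i ∧ i ≤ j+k) := by
      unfold permF at hlt
      split_ifs at hlt <;> omega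
    rcases key with ⟨he, h3, h4⟩ | h
    · exact Or.inl ⟨i/2, ⟨by omega, by omega⟩, by omega⟩
    · exact Or.inr h
  · intro h
    have hi : (i % 2 = 0 ∧ 2 ≤ i ∧ i ≤ 2*j) ∨ (2*j+1 ≤ i ∧ i ≤ j+k) := by
      rcases h with ⟨a, ⟨ha1, ha2⟩, rfl⟩ | h
      · exact Or.inl ⟨by omega, by omega, by omega⟩
      · exact Or.inr h
    clear h
    have hmem : 1 ≤ i ∧ i ≤ n - 1 := by omega
    refine ⟨hmem, ?_⟩
    rw [permL_getD n j k i (by omega), permL_getD n j k (i-1) (by omega)]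
    unfold permF
    split_ifs <;> omega

lemma permL_des : des (permL n j k) = k := by
  rw [des, permL_desSet hn hj hk1 hk2, Finset.card_union_of_disjoint,
    Finset.card_image_of_injective _ (fun a b hab => by omega),
    Nat.card_Icc, Nat.card_Icc]
  · omega
  · rw [Finset.disjoint_left]
    rintro x hx hy
    simp only [Finset.mem_image, Finset.mem_Icc] at hx hy
    obtain ⟨a, ⟨ha1, ha2⟩, rfl⟩ := hx
    omega

set_option maxHeartbeats 1000000 in
lemma permL_pk : pk (permL n j k) = j := by
  have hset : (Finset.Icc 2 ((permL n j k).length - 1)).filter (fun i =>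
      (permL n j k).getD (i-2) 0 < (permL n j k).getD (i-1) 0 ∧
      (permL n j k).getD i 0 < (permL n j k).getD (i-1) 0) =
      (Finset.Icc 1 j).image (fun a => 2 * a) := by
    ext i
    simp only [permL_length, Finset.mem_filter, Finset.mem_Icc, Finset.mem_image]
    constructor
    · rintro ⟨⟨h1, h2⟩, hlt1, hlt2⟩
      rw [permL_getD n j k (i-2) (by omega), permL_getD n j k (i-1) (by omega)] at hlt1
      rw [permL_getD n j k i (by omega), permL_getD n j k (i-1) (by omega)] at hlt2
      have key : i % 2 = 0 ∧ 2 ≤ i ∧ i ≤ 2*j := by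
        unfold permF at hlt1 hlt2
        split_ifs at hlt1 hlt2 <;> omega
      exact ⟨i/2, ⟨by omega, by omega⟩, by omega⟩
    · rintro ⟨a, ⟨ha1, ha2⟩, rfl⟩
      refine ⟨⟨by omega, by omega⟩, ?_⟩
      rw [permL_getD n j k (2*a-2) (by omega), permL_getD n j k (2*a-1) (by omega),
        permL_getD n j k (2*a) (by omega)]
      unfold permF
      split_ifs <;> omega
  rw [pk, hset, Finset.card_image_of_injective _ (fun a b hab => by omega), Nat.card_Icc]
  omega

end

theorem exists_perm_pk_des (n j k : ℕ) (hn : 1 ≤ n) (hj : j ≤ (n - 1) / 2)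
    (hk1 : j ≤ k) (hk2 : k ≤ n - j - 1) :
    ∃ π : List ℕ, π.Perm (List.range' 1 n) ∧ pk π = j ∧ des π = k :=
  ⟨permL n j k, permL_perm hn hk1 hk2, permL_pk hn hj hk1 hk2, permL_des hn hj hk1 hk2⟩
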